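/- Let TD be a tree decomposition of an instance I with bags of size at most k such that every element of I lies in at most 2 bags. If V is a set of connected conjunctive query views each of radius at most r, then the view image V(I) has treewidth at most k(k^{r+1} − 1)/(k − 1): the tree obtained by replacing each bag b by its r-extension ext(b, r) is a tree decomposition of V(I) with bags of size at most k + k² + … + k^{r+1}. -/

import Mathlib

namespace MonDet

/-- A fact over schema `σ` with arities `ar`, with elements from domain `D`. -/
abbrev RFact (σ : Type) (ar : σ → ℕ) (D : Type) := Σ R : σ, Fin (ar R) → D

/-- `h` is a homomorphism from instance `I` to instance `I'`. -/
def IsHom {σ : Type} (ar : σ → ℕ) {D D' : Type} (h : D → D')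
    (I : Set (RFact σ ar D)) (I' : Set (RFact σ ar D')) : Prop :=
  ∀ f ∈ I, (⟨f.1, h ∘ f.2⟩ : RFact σ ar D') ∈ I'

/-- The active domain of an instance. -/
def adom {σ D : Type} (ar : σ → ℕ) (I : Set (RFact σ ar D)) : Set D :=
  {a | ∃ f ∈ I, ∃ i, f.2 i = a}

/-- The Gaifman graph of an instance: elements are adjacent iff they are distinct
and co-occur in some fact. -/
def gaifman {σ D : Type} (ar : σ → ℕ) (I : Set (RFact σ ar D)) : SimpleGraph D :=
  SimpleGraph.fromRel (fun a b => ∃ f ∈ I, (∃ i, f.2 i = a) ∧ (∃ j, f.2 j = b))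

/-- A conjunctive query over schema `(σ, ar)`: free variables `Fin nfree`,
existential variables `Var`, and a set of atoms (its canonical database). -/
structure CQ (σ : Type) (ar : σ → ℕ) where
  nfree : ℕ
  Var : Type
  atoms : Set (RFact σ ar (Fin nfree ⊕ Var))

/-- The output of a CQ on an instance: tuples witnessed by a homomorphism of the
canonical database. -/
def CQ.eval {σ D : Type} {ar : σ → ℕ} (q : CQ σ ar)
    (I : Set (RFact σ ar D)) : Set (Fin q.nfree → D) :=
  {t | ∃ η : (Fin q.nfree ⊕ q.Var) → D,
    (∀ i, η (Sum.inl i) = t i) ∧ IsHom ar η q.atoms I}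

/-- A CQ is connected if the Gaifman graph of its canonical database is connected
on its active domain. -/
def CQ.Connected {σ : Type} {ar : σ → ℕ} (q : CQ σ ar) : Prop :=
  ∀ a b, a ∈ adom ar q.atoms → b ∈ adom ar q.atoms →
    (gaifman ar q.atoms).Reachable a b

/-- A CQ has radius at most `r`: some active-domain element is within Gaifman
distance `r` of every active-domain element. -/
def CQ.RadiusLE {σ : Type} {ar : σ → ℕ} (q : CQ σ ar) (r : ℕ) : Prop :=
  ∃ u ∈ adom ar q.atoms, ∀ w ∈ adom ar q.atoms,
    ∃ p : (gaifman ar q.atoms).Walk u w, p.length ≤ r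

/-- The view image of `I` under a collection of CQ views indexed by `ν`. -/
def viewImage {σ D ν : Type} (ar : σ → ℕ) (q : ν → CQ σ ar)
    (I : Set (RFact σ ar D)) : Set (RFact ν (fun v => (q v).nfree) D) :=
  {f | f.2 ∈ (q f.1).eval I}

/-- A tree decomposition of the instance `I`. -/
def IsTreeDecomp {σ D ι : Type} (ar : σ → ℕ) (T : SimpleGraph ι)
    (bags : ι → Set D) (I : Set (RFact σ ar D)) : Prop :=
  T.IsTree ∧
  (∀ f ∈ I, ∃ v : ι, ∀ i, f.2 i ∈ bags v) ∧
  (∀ d : D, (T.induce {v : ι | d ∈ bags v}).Preconnected)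

/-- The `n`-extension of the bag at node `b`: `ext 0 = bag b`, and `ext (n+1)`
consists of all elements sharing a bag with some element of `ext n`. -/
def ext {D ι : Type} (bag : ι → Set D) (b : ι) : ℕ → Set D
  | 0 => bag b
  | n + 1 => {u | ∃ v ∈ ext bag b n, ∃ w : ι, u ∈ bag w ∧ v ∈ bag w}


section Aux

variable {D ι : Type} {bag : ι → Set D} {b : ι}

lemma mem_ext_bag {n : ℕ} {d : D} (h : d ∈ ext bag b n) : ∃ w, d ∈ bag w := by
  cases n with
  | zero => exact ⟨b, h⟩
  | succ m => obtain ⟨v, _, w, hd, _⟩ := h; exact ⟨w, hd⟩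

lemma ext_mono_succ {n : ℕ} : ext bag b n ⊆ ext bag b (n + 1) := by
  intro d hd
  obtain ⟨w, hw⟩ := mem_ext_bag hd
  exact ⟨d, hd, w, hw, hw⟩

lemma ext_mono {m n : ℕ} (h : m ≤ n) : ext bag b m ⊆ ext bag b n := by
  induction h with
  | refl => exact fun _ h => h
  | step _ ih => exact fun d hd => ext_mono_succ (ih hd)

lemma bag_subset_ext {n : ℕ} {v : D} {w : ι} (hv : v ∈ ext bag b n) (hvw : v ∈ bag w) :
    bag w ⊆ ext bag b (n + 1) :=
  fun _ hx => ⟨v, hv, w, hx, hvw⟩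

lemma ext_finite (hfin : ∀ v, (bag v).Finite) (htwo : ∀ d : D, {v | d ∈ bag v}.Finite) :
    ∀ n, (ext bag b n).Finite
  | 0 => hfin b
  | (n + 1) => by
    have hn := ext_finite hfin htwo n
    have hsub : ext bag b (n + 1) ⊆ ⋃ v ∈ ext bag b n, ⋃ w ∈ {w | v ∈ bag w}, bag w := by
      rintro x ⟨v, hv, w, hx, hvw⟩
      exact Set.mem_biUnion hv (Set.mem_biUnion hvw hx)
    exact Set.Finite.subset
      (Set.Finite.biUnion hn fun v _ => Set.Finite.biUnion (htwo v) fun w _ => hfin w) hsub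

lemma ncard_biUnion_le' {α β : Type} {s : Set α} (hs : s.Finite) {f : α → Set β} {k : ℕ}
    (hk : ∀ a ∈ s, (f a).ncard ≤ k) :
    (⋃ a ∈ s, f a).ncard ≤ s.ncard * k := by
  refine Set.Finite.induction_on
    (motive := fun s _ => (∀ a ∈ s, (f a).ncard ≤ k) → (⋃ a ∈ s, f a).ncard ≤ s.ncard * k)
    s hs (fun _ => by simp) ?_ hk
  intro a s ha hs ih hk
  rw [Set.biUnion_insert]
  calc (f a ∪ ⋃ x ∈ s, f x).ncard ≤ (f a).ncard + (⋃ x ∈ s, f x).ncard :=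
        Set.ncard_union_le _ _
    _ ≤ k + s.ncard * k :=
        Nat.add_le_add (hk a (Set.mem_insert a s))
          (ih fun x hx => hk x (Set.mem_insert_of_mem a hx))
    _ ≤ (insert a s).ncard * k := by
        rw [Set.ncard_insert_of_notMem ha hs]; ring_nf; omega

/-- every element of `ext bag b n` lies in a bag entirely contained in `ext bag b n`. -/
lemma full_bag {n : ℕ} {d : D} (h : d ∈ ext bag b n) :
    ∃ w0, d ∈ bag w0 ∧ bag w0 ⊆ ext bag b n := by
  cases n with
  | zero => exact ⟨b, h, fun _ hx => hx⟩
  | succ m =>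
    obtain ⟨v, hv, w, hd, hvw⟩ := h
    exact ⟨w, hd, bag_subset_ext hv hvw⟩

lemma reach_mono {T : SimpleGraph ι} {A B : Set ι} (hAB : A ⊆ B) {x y : ι} (hx : x ∈ A)
    (hy : y ∈ A) (h : (T.induce A).Reachable ⟨x, hx⟩ ⟨y, hy⟩) :
    (T.induce B).Reachable ⟨x, hAB hx⟩ ⟨y, hAB hy⟩ :=
  h.map (SimpleGraph.induceHomOfLE T hAB).toHom

lemma ext_preconn {T : SimpleGraph ι}
    (htd3 : ∀ d : D, (T.induce {v | d ∈ bag v}).Preconnected) :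
    ∀ (n : ℕ) (d : D), (T.induce {v | d ∈ ext bag v n}).Preconnected := by
  intro n
  induction n with
  | zero => exact htd3
  | succ n ih =>
    rintro d ⟨x, hx⟩ ⟨y, hy⟩
    obtain ⟨ex, hex, wx, hdwx, hexwx⟩ := hx
    obtain ⟨ey, hey, wy, hdwy, heywy⟩ := hy
    have hsub1 : ∀ (e : D) (w' : ι), e ∈ bag w' → d ∈ bag w' →
        {v | e ∈ ext bag v n} ⊆ {v | d ∈ ext bag v (n + 1)} :=
      fun e w' hew hdw v hv => ⟨e, hv, w', hdw, hew⟩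
    have hsub0 : {v | d ∈ bag v} ⊆ {v | d ∈ ext bag v (n + 1)} :=
      fun v hv => ext_mono (Nat.zero_le (n + 1)) hv
    have hwx : wx ∈ {v | ex ∈ ext bag v n} := ext_mono (Nat.zero_le n) hexwx
    have hwy : wy ∈ {v | ey ∈ ext bag v n} := ext_mono (Nat.zero_le n) heywy
    have r1 := reach_mono (hsub1 ex wx hexwx hdwx) hex hwx (ih ex ⟨x, hex⟩ ⟨wx, hwx⟩)
    have r2 := reach_mono hsub0 hdwx hdwy (htd3 d ⟨wx, hdwx⟩ ⟨wy, hdwy⟩)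
    have r3 := reach_mono (hsub1 ey wy heywy hdwy) hey hwy (ih ey ⟨y, hey⟩ ⟨wy, hwy⟩)
    exact (r1.trans r2).trans r3.symm

lemma ext_ncard_le {k : ℕ} (hfin : ∀ v, (bag v).Finite) (hcard : ∀ v, (bag v).ncard ≤ k)
    (htwo : ∀ d : D, {v | d ∈ bag v}.Finite ∧ {v | d ∈ bag v}.ncard ≤ 2) :
    ∀ n, (ext bag b n).ncard ≤ ∑ i ∈ Finset.range (n + 1), k ^ (i + 1) := by
  set N : ℕ → Set D := fun n => match n with
    | 0 => bag b
    | n + 1 => ext bag b (n + 1) \ ext bag b n with hN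
  have hNext : ∀ n, N n ⊆ ext bag b n := by
    intro n
    cases n with
    | zero => exact fun _ h => h
    | succ m => exact fun x hx => hx.1
  -- "extra" set bound
  have hextra : ∀ (n : ℕ) (d : D), d ∈ N n →
      ({x | ∃ w, x ∈ bag w ∧ d ∈ bag w} \ ext bag b n).ncard ≤ k := by
    intro n d hd
    obtain ⟨w0, hdw0, hw0⟩ := full_bag (hNext n hd)
    have hBfin : ({w | d ∈ bag w} \ {w0}).Finite := (htwo d).1.diff
    have hB1 : ({w | d ∈ bag w} \ {w0}).ncard ≤ 1 := by
      have h1 := Set.ncard_diff_singleton_of_mem (show w0 ∈ {w | d ∈ bag w} from hdw0)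
      have h2 := (htwo d).2
      omega
    have hcase := Set.ncard_le_one_iff_eq hBfin |>.mp hB1
    have hsub : ({x | ∃ w, x ∈ bag w ∧ d ∈ bag w} \ ext bag b n) ⊆
        ⋃ w ∈ ({w | d ∈ bag w} \ {w0}), bag w := by
      rintro x ⟨⟨w, hxw, hdw⟩, hxn⟩
      have hne : w ≠ w0 := by
        intro he; subst he; exact hxn (hw0 hxw)
      exact Set.mem_biUnion ⟨hdw, hne⟩ hxw
    rcases hcase with he | ⟨w1, he⟩
    · rw [he] at hsub
      have hemp : ({x | ∃ w, x ∈ bag w ∧ d ∈ bag w} \ ext bag b n) = ∅ := by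
        apply Set.eq_empty_of_subset_empty
        simpa using hsub
      simp [hemp]
    · rw [he] at hsub
      have hsub' : ({x | ∃ w, x ∈ bag w ∧ d ∈ bag w} \ ext bag b n) ⊆ bag w1 := by
        intro x hx
        simpa using hsub hx
      calc ({x | ∃ w, x ∈ bag w ∧ d ∈ bag w} \ ext bag b n).ncard
          ≤ (bag w1).ncard := Set.ncard_le_ncard hsub' (hfin w1)
        _ ≤ k := hcard w1
  -- N step inclusion
  have hNstep : ∀ n, N (n + 1) ⊆
      ⋃ d ∈ N n, ({x | ∃ w, x ∈ bag w ∧ d ∈ bag w} \ ext bag b n) := by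
    intro n
    rintro x ⟨⟨v, hv, w, hxw, hvw⟩, hxn⟩
    have hvN : v ∈ N n := by
      cases n with
      | zero => exact hv
      | succ m =>
        refine ⟨hv, fun hvm => hxn ?_⟩
        exact ⟨v, hvm, w, hxw, hvw⟩
    exact Set.mem_biUnion hvN ⟨⟨w, hxw, hvw⟩, hxn⟩
  have hNfin : ∀ n, (N n).Finite := by
    intro n
    cases n with
    | zero => exact hfin b
    | succ m => exact (ext_finite hfin (fun d => (htwo d).1) (m + 1)).diff
  have hNcard : ∀ n, (N n).ncard ≤ k ^ (n + 1) := by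
    intro n
    induction n with
    | zero => simpa using hcard b
    | succ n ih =>
      calc (N (n + 1)).ncard
          ≤ (⋃ d ∈ N n, ({x | ∃ w, x ∈ bag w ∧ d ∈ bag w} \ ext bag b n)).ncard := by
            exact Set.ncard_le_ncard (hNstep n)
              (Set.Finite.biUnion (hNfin n) fun d hd =>
                (ext_finite hfin (fun d => (htwo d).1) (n + 1)).subset
                  (fun x hx => hx.1.elim fun w hw => ⟨d, hNext n hd, w, hw.1, hw.2⟩))
        _ ≤ (N n).ncard * k := ncard_biUnion_le' (hNfin n) (fun d hd => hextra n d hd)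
        _ ≤ k ^ (n + 1) * k := Nat.mul_le_mul_right k ih
        _ = k ^ (n + 1 + 1) := (pow_succ k (n + 1)).symm
  intro n
  induction n with
  | zero => simpa [Finset.sum_range_one, ext] using hcard b
  | succ n ih =>
    have hsplit : ext bag b (n + 1) ⊆ ext bag b n ∪ N (n + 1) := by
      intro x hx
      by_cases hxn : x ∈ ext bag b n
      · exact Or.inl hxn
      · exact Or.inr ⟨hx, hxn⟩
    calc (ext bag b (n + 1)).ncard
        ≤ (ext bag b n ∪ N (n + 1)).ncard := by
          refine Set.ncard_le_ncard hsplit ?_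
          exact ((ext_finite hfin (fun d => (htwo d).1) n)).union (hNfin (n + 1))
      _ ≤ (ext bag b n).ncard + (N (n + 1)).ncard := Set.ncard_union_le _ _
      _ ≤ (∑ i ∈ Finset.range (n + 1), k ^ (i + 1)) + k ^ (n + 1 + 1) :=
          Nat.add_le_add ih (hNcard (n + 1))
      _ = ∑ i ∈ Finset.range (n + 1 + 1), k ^ (i + 1) := (Finset.sum_range_succ _ _).symm

end Aux

/-- Let `TD` be a tree decomposition of `I` with bags of size at
most `k` in which every element lies in at most `2` bags. If `V` is a collection
of connected CQ views, each of radius at most `r` (and safe: every free variable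
occurs in some atom), then replacing each bag by its `r`-extension yields a tree
decomposition of the view image `V(I)` with bags of size at most
`k + k² + … + k^{r+1}` (so `V(I)` has treewidth at most `k(k^{r+1}−1)/(k−1)`). -/
theorem view_image_treewidth_bound
    {σ D ι ν : Type} (ar : σ → ℕ) (k r : ℕ)
    (I : Set (RFact σ ar D)) (T : SimpleGraph ι) (bag : ι → Set D)
    (htd : IsTreeDecomp ar T bag I)
    (hfin : ∀ v, (bag v).Finite) (hcard : ∀ v, (bag v).ncard ≤ k)
    (htwo : ∀ d : D, {v : ι | d ∈ bag v}.Finite ∧ {v : ι | d ∈ bag v}.ncard ≤ 2)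
    (q : ν → CQ σ ar)
    (hconn : ∀ v, (q v).Connected)
    (hrad : ∀ v, (q v).RadiusLE r)
    (hsafe : ∀ (v : ν) (i : Fin (q v).nfree), Sum.inl i ∈ adom ar (q v).atoms) :
    IsTreeDecomp (fun v => (q v).nfree) T (fun b => ext bag b r)
      (viewImage ar q I) ∧
    ∀ b : ι, (ext bag b r).Finite ∧
      (ext bag b r).ncard ≤ ∑ i ∈ Finset.range (r + 1), k ^ (i + 1) := by
  obtain ⟨htree, hcover, hrun⟩ := htd
  refine ⟨⟨htree, ?_, ?_⟩, ?_⟩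
  · -- every fact of the view image is covered by some extended bag
    rintro ⟨v0, t⟩ ht
    obtain ⟨η, hηt, hηhom⟩ := ht
    obtain ⟨u, hu, hwalk⟩ := hrad v0
    obtain ⟨g, hg, i0, hgi⟩ := hu
    obtain ⟨b0, hb0⟩ := hcover ⟨g.1, η ∘ g.2⟩ (hηhom g hg)
    have hηu : η u ∈ bag b0 := by rw [← hgi]; exact hb0 i0
    have key : ∀ {a c : Fin (q v0).nfree ⊕ (q v0).Var}
        (p : (gaifman ar (q v0).atoms).Walk a c) (m : ℕ),
        η a ∈ ext bag b0 m → η c ∈ ext bag b0 (m + p.length) := by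
      intro a c p
      induction p with
      | nil => intro m hm; simpa using hm
      | @cons a x c h p ih =>
        intro m hm
        rw [gaifman, SimpleGraph.fromRel_adj] at h
        obtain ⟨f, hf, hfa, hfx⟩ : ∃ f ∈ (q v0).atoms,
            (∃ i, f.2 i = a) ∧ (∃ j, f.2 j = x) := by
          rcases h.2 with ⟨f, hf, h1, h2⟩ | ⟨f, hf, h1, h2⟩
          · exact ⟨f, hf, h1, h2⟩
          · exact ⟨f, hf, h2, h1⟩
        obtain ⟨w', hw'⟩ := hcover ⟨f.1, η ∘ f.2⟩ (hηhom f hf)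
        obtain ⟨ia, hia⟩ := hfa
        obtain ⟨ix, hix⟩ := hfx
        have hηa : η a ∈ bag w' := by rw [← hia]; exact hw' ia
        have hηx : η x ∈ bag w' := by rw [← hix]; exact hw' ix
        have hx1 : η x ∈ ext bag b0 (m + 1) := ⟨η a, hm, w', hηx, hηa⟩
        have := ih (m + 1) hx1
        have harith : m + 1 + p.length = m + (SimpleGraph.Walk.cons h p).length := by
          show _ = m + (p.length + 1); omega
        rwa [harith] at this
    refine ⟨b0, fun i => ?_⟩
    obtain ⟨p, hp⟩ := hwalk (Sum.inl i) (hsafe v0 i)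
    have := key p 0 hηu
    rw [Nat.zero_add] at this
    have h2 : η (Sum.inl i) ∈ ext bag b0 r := ext_mono hp this
    exact (hηt i) ▸ h2
  · -- runs are connected
    intro d
    exact ext_preconn hrun r d
  · -- finiteness and cardinality
    intro b
    exact ⟨ext_finite hfin (fun d => (htwo d).1) r,
      ext_ncard_le hfin hcard htwo r⟩

end MonDet
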